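/- Let S be a substring-free set of strings over the DNA alphabet and CYC(G_S) an optimal cycle cover of the distance graph G_S. For each cycle C = s'_{i1},…,s'_{ir},s'_{i1} of CYC(G_S), fix an index j and let y_C = ⟨s'_{ij},…,s'_{ir},s'_{i1},…,s'_{ij}⟩, and let x_C be any substring of y_C. Let A = {x_C : C ∈ CYC(G_S)}. Then OPT(A) ≤ OPT(S) + w(CYC(G_S)). -/

import Mathlib

/-- The DNA alphabet. -/
inductive DNA : Type
  | A | T | G | C
  deriving DecidableEq, Repr

/-- Complement of a DNA base: a↔t, g↔c. -/
def DNA.compl : DNA → DNA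
  | .A => .T
  | .T => .A
  | .G => .C
  | .C => .G

/-- Strings over the DNA alphabet. -/
abbrev Str : Type := List DNA

/-- Reverse complement of a string. -/
def rc (s : Str) : Str := (s.map DNA.compl).reverse

/-- An approximate solution for the SCS-RC instance `S`: a string containing,
for each `s ∈ S`, either `s` or its reverse complement as a substring. -/
def ApproxSol (S : Finset Str) (u : Str) : Prop :=
  ∀ s ∈ S, s <:+: u ∨ rc s <:+: u

/-- `OPT S` is the minimum length of an approximate solution for the SCS-RC instance `S`. -/
noncomputable def OPT (S : Finset Str) : ℕ :=
  sInf {n | ∃ u : Str, ApproxSol S u ∧ u.length = n}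

/-- `S` is substring-free: no string of `S ∪ S̄^R` is a substring of another. -/
def SubstrFree (S : Finset Str) : Prop :=
  ∀ x, (x ∈ S ∨ rc x ∈ S) → ∀ y, (y ∈ S ∨ rc y ∈ S) → x ≠ y → ¬ x <:+: y

/-- `ov x y`: the length of the longest string `v` such that `x = u ++ v` and
`y = v ++ w` for nonempty `u`, `w`. -/
noncomputable def ov (x y : Str) : ℕ :=
  sSup {k | ∃ v : Str, v.length = k ∧ (∃ u : Str, u ≠ [] ∧ x = u ++ v) ∧
        (∃ w : Str, w ≠ [] ∧ y = v ++ w)}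

/-- `prefStr x y = pref(x, y)`: the prefix of `x` with respect to `y`. -/
noncomputable def prefStr (x y : Str) : Str := x.take (x.length - ov x y)

/-- `distStr x y = dist(x, y) = |x| - ov(x, y)`. -/
noncomputable def distStr (x y : Str) : ℕ := x.length - ov x y

/-- The merge `⟨x, y⟩ = pref(x, y) ++ y`. -/
noncomputable def mergeStr (x y : Str) : Str := prefStr x y ++ y

/-- `superstr [x1, …, xr] = ⟨x1, …, xr⟩ = pref(x1,x2) ⋯ pref(x_{r-1},x_r) ++ x_r`. -/
noncomputable def superstr : List Str → Str
  | [] => []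
  | [x] => x
  | x :: y :: rest => prefStr x y ++ superstr (y :: rest)

/-- `‖S‖`: the total length of the strings of the finite set `S`. -/
def normS (S : Finset Str) : ℕ := ∑ s ∈ S, s.length

/-- Pairs `(x, y)` of strings from the collection `S` or their reverse complements,
with `x = y`, or with `x ≠ y` and `rc x ≠ y`, as considered by MGREEDY-RC. -/
def ValidPair (S : Finset Str) (x y : Str) : Prop :=
  (x ∈ S ∨ rc x ∈ S) ∧ (y ∈ S ∨ rc y ∈ S) ∧ (x = y ∨ (x ≠ y ∧ rc x ≠ y))

/-- `MGreedyExec S T`: some execution of MGREEDY-RC starting from the collection `S`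
(under some tie-breaking among pairs of maximum overlap) produces the set `T`. -/
inductive MGreedyExec : Finset Str → Finset Str → Prop
  | done : MGreedyExec ∅ ∅
  | close (S T : Finset Str) (x : Str)
      (hx : x ∈ S ∨ rc x ∈ S)
      (hmax : ∀ a b, ValidPair S a b → ov a b ≤ ov x x)
      (h : MGreedyExec (S \ {x, rc x}) T) :
      MGreedyExec S (insert x T)
  | merge (S T : Finset Str) (x y : Str)
      (hx : x ∈ S ∨ rc x ∈ S) (hy : y ∈ S ∨ rc y ∈ S)
      (hne : x ≠ y) (hrc : rc x ≠ y)
      (hmax : ∀ a b, ValidPair S a b → ov a b ≤ ov x y)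
      (h : MGreedyExec (insert (mergeStr x y) (S \ {x, rc x, y, rc y})) T) :
      MGreedyExec S T

/-- `GreedyExec S u`: some execution of GREEDY-RC starting from the collection `S`
(under some tie-breaking among pairs of maximum overlap) outputs the string `u`. -/
inductive GreedyExec : Finset Str → Str → Prop
  | single (x : Str) : GreedyExec {x} x
  | merge (S : Finset Str) (u x y : Str)
      (hx : x ∈ S ∨ rc x ∈ S) (hy : y ∈ S ∨ rc y ∈ S)
      (hne : x ≠ y) (hrc : rc x ≠ y)
      (hmax : ∀ a b, (a ∈ S ∨ rc a ∈ S) → (b ∈ S ∨ rc b ∈ S) → a ≠ b → rc a ≠ b →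
        ov a b ≤ ov x y)
      (hcard : 1 < S.card)
      (h : GreedyExec (insert (mergeStr x y) (S \ {x, rc x, y, rc y})) u) :
      GreedyExec S u

/-- Reverse complement of a path: the path of the reverse complements, reversed. -/
def rcPath (p : List Str) : List Str := (p.map rc).reverse

/-- Valid pairs for the path-level description of MGREEDY-RC, where each collection
element is the path of original strings composing it, its string value being `superstr`. -/
def ValidPairP (P : Finset (List Str)) (p q : List Str) : Prop :=
  (p ∈ P ∨ rcPath p ∈ P) ∧ (q ∈ P ∨ rcPath q ∈ P) ∧
  (superstr p = superstr q ∨ (superstr p ≠ superstr q ∧ rc (superstr p) ≠ superstr q))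

/-- `MGreedyCyc P C`: the path-level description of an execution of MGREEDY-RC.
Starting from the collection of paths `P`, merging the paths `p` and `q` (adding the
edge from the last vertex of `p` to the first of `q`) when the corresponding strings
are merged, and closing the path `p` into the cycle `p` (with the edge from its last
vertex to its first) when the corresponding string is moved to `T`, some execution
produces the set of closed cycles `C`. -/
inductive MGreedyCyc : Finset (List Str) → Finset (List Str) → Prop
  | done : MGreedyCyc ∅ ∅
  | close (P C : Finset (List Str)) (p : List Str)
      (hp : p ∈ P ∨ rcPath p ∈ P)
      (hmax : ∀ q₁ q₂, ValidPairP P q₁ q₂ →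
        ov (superstr q₁) (superstr q₂) ≤ ov (superstr p) (superstr p))
      (h : MGreedyCyc (P \ {p, rcPath p}) C) :
      MGreedyCyc P (insert p C)
  | merge (P C : Finset (List Str)) (p q : List Str)
      (hp : p ∈ P ∨ rcPath p ∈ P) (hq : q ∈ P ∨ rcPath q ∈ P)
      (hne : superstr p ≠ superstr q) (hrc : rc (superstr p) ≠ superstr q)
      (hmax : ∀ q₁ q₂, ValidPairP P q₁ q₂ →
        ov (superstr q₁) (superstr q₂) ≤ ov (superstr p) (superstr q))
      (h : MGreedyCyc (insert (p ++ q) (P \ {p, rcPath p, q, rcPath q})) C) :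
      MGreedyCyc P C

/-- The weight of the cycle `x1, …, xr, x1` given by the list `[x1, …, xr]`:
`Σ_{i=1}^{r} dist(x_i, x_{i+1})` with indices modulo `r`. -/
noncomputable def cycleWeight (c : List Str) : ℕ :=
  ((c.zip (c.rotate 1)).map fun p => distStr p.1 p.2).sum

/-- `C` is a cycle cover of the distance graph `G_S`: a set of vertex-disjoint cycles
on vertices of `S ∪ S̄^R` such that for each `s ∈ S` exactly one of `s` and `rc s`
is contained in the cycles. -/
def IsCycleCover (S : Finset Str) (C : Finset (List Str)) : Prop :=
  (∀ c ∈ C, c ≠ []) ∧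
  (∀ c ∈ C, c.Nodup) ∧
  (∀ c ∈ C, ∀ d ∈ C, c ≠ d → ∀ x ∈ c, x ∉ d) ∧
  (∀ c ∈ C, ∀ x ∈ c, x ∈ S ∨ rc x ∈ S) ∧
  (∀ s ∈ S, Xor' (∃ c ∈ C, s ∈ c) (∃ c ∈ C, rc s ∈ c))

/-- The total weight of a cycle cover. -/
noncomputable def coverWeight (C : Finset (List Str)) : ℕ := ∑ c ∈ C, cycleWeight c

/-- `minCoverWeight S = w(CYC(G_S))`: the minimum total weight of a cycle cover of `G_S`. -/
noncomputable def minCoverWeight (S : Finset Str) : ℕ :=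
  sInf {n | ∃ C : Finset (List Str), IsCycleCover S C ∧ coverWeight C = n}

/-- `x` is a factor of `s`: `s = x^i ++ y` for some `i ≥ 1` and some prefix `y` of `x`. -/
def IsFactor (x s : Str) : Prop :=
  x ≠ [] ∧ ∃ i : ℕ, 1 ≤ i ∧ ∃ y : Str, y <+: x ∧ s = (List.replicate i x).flatten ++ y

/-- `period s`: the length of the shortest factor of `s`. -/
noncomputable def periodStr (s : Str) : ℕ :=
  sInf {k | ∃ x : Str, IsFactor x s ∧ x.length = k}

open Classical in
/-- `factorStr s`: a shortest factor of `s`. -/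
noncomputable def factorStr (s : Str) : Str :=
  if h : ∃ x : Str, IsFactor x s ∧ x.length = periodStr s then h.choose else []

/-- Two strings are equivalent if the factor of one is a cyclic shift of the factor
of the other. -/
def EquivStr (x y : Str) : Prop :=
  ∃ e f : Str, factorStr x = e ++ f ∧ factorStr y = f ++ e

section AuxProof

-- rc lemmas
lemma DNA.compl_compl (b : DNA) : b.compl.compl = b := by cases b <;> rfl

lemma rc_rc (s : Str) : rc (rc s) = s := by
  simp [rc, List.map_map, Function.comp_def, DNA.compl_compl]

lemma rc_length (s : Str) : (rc s).length = s.length := by simp [rc]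

lemma rc_append (s t : Str) : rc (s ++ t) = rc t ++ rc s := by simp [rc]

lemma rc_inj {s t : Str} (h : rc s = rc t) : s = t := by
  rw [← rc_rc s, h, rc_rc]

lemma rc_infix {a b : Str} (h : a <:+: b) : rc a <:+: rc b := by
  obtain ⟨s, t, rfl⟩ := h
  exact ⟨rc t, rc s, by rw [rc_append, rc_append, List.append_assoc]⟩

lemma rc_prefix_suffix {a b : Str} (h : a <+: b) : rc a <:+ rc b := by
  obtain ⟨t, rfl⟩ := h; exact ⟨rc t, (rc_append _ _).symm⟩

lemma rc_suffix_prefix {a b : Str} (h : a <:+ b) : rc a <+: rc b := by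
  obtain ⟨t, rfl⟩ := h; exact ⟨rc t, (rc_append _ _).symm⟩

-- occurrences
abbrev OccAt (u : Str) (s : ℕ) (t : Str) : Prop := (u.drop s).take t.length = t

lemma occAt_of_infix {t u : Str} (h : t <:+: u) :
    ∃ s, OccAt u s t ∧ s + t.length ≤ u.length := by
  obtain ⟨a, b, hab⟩ := h
  refine ⟨a.length, ?_, ?_⟩
  · have h1 : u.drop a.length = t ++ b := by
      rw [← hab, List.append_assoc, List.drop_left]
    rw [OccAt, h1, List.take_left]
  · rw [← hab]; simp

lemma infix_of_nested {u t1 t2 : Str} {s1 s2 : ℕ} (h1 : OccAt u s1 t1) (h2 : OccAt u s2 t2)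
    (hs : s1 ≤ s2) (he : s2 + t2.length ≤ s1 + t1.length) : t2 <:+: t1 := by
  have hd : s2 - s1 + t2.length ≤ t1.length := by omega
  have key : t2 = (t1.drop (s2 - s1)).take t2.length := by
    calc t2 = (u.drop s2).take t2.length := h2.symm
      _ = ((u.drop s1).drop (s2 - s1)).take t2.length := by
            rw [List.drop_drop, show s1 + (s2 - s1) = s2 by omega]
      _ = (((u.drop s1).take t1.length).drop (s2 - s1)).take t2.length := by
            rw [List.drop_take, List.take_take, min_eq_left (by omega)]
      _ = (t1.drop (s2 - s1)).take t2.length := by rw [h1]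
  rw [key]
  exact ((List.take_prefix _ _).isInfix).trans (List.drop_suffix _ _).isInfix

lemma suffix_drop_eq {a b : Str} (h : a <:+ b) {k : ℕ} (hk : k ≤ a.length) :
    b.drop (b.length - k) = a.drop (a.length - k) := by
  obtain ⟨c, rfl⟩ := h
  calc (c ++ a).drop ((c ++ a).length - k)
      = (c ++ a).drop (c.length + (a.length - k)) := by
        congr 1; simp; omega
    _ = ((c ++ a).drop c.length).drop (a.length - k) := by rw [List.drop_drop]
    _ = a.drop (a.length - k) := by rw [List.drop_left]

lemma prefix_take_eq {a b : Str} (h : a <+: b) {k : ℕ} (hk : k ≤ a.length) :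
    b.take k = a.take k := by
  obtain ⟨c, rfl⟩ := h
  rw [List.take_append_of_le_length hk]

-- the chain construction
lemma chain_aux (u : Str) :
    ∀ (L : List (Str × Str × ℕ)) (r : Str × Str × ℕ),
      (∀ q ∈ L ++ [r], q.2.1 <+: q.1 ∧ q.2.1 <:+ q.1 ∧ OccAt u q.2.2 q.2.1) →
      List.Chain' (fun a b => a.2.2 ≤ b.2.2 ∧ a.2.2 + a.2.1.length ≤ b.2.2 + b.2.1.length)
        (L ++ [r]) →
      ∃ v : Str, (∀ q ∈ L ++ [r], q.1 <:+: v) ∧ r.1 <:+ v ∧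
        v.length + ((L ++ [r]).map fun q => q.2.1.length).sum
          ≤ (r.2.2 + r.2.1.length) + ((L ++ [r]).map fun q => q.1.length).sum := by
  intro L
  induction L using List.reverseRecOn with
  | nil =>
    intro r hall _
    refine ⟨r.1, ?_, List.suffix_rfl, ?_⟩
    · intro q hq
      simp only [List.nil_append, List.mem_singleton] at hq
      rw [hq]
    · obtain ⟨hpre, hsuf, hocc⟩ := hall r (by simp)
      have := hpre.length_le
      simp; omega
  | append_singleton M rm IH =>
    intro r hall hch
    obtain ⟨y, t, s⟩ := r
    obtain ⟨ym, tm, sm⟩ := rm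
    rcases List.isChain_append.mp hch with ⟨hch1, -, hrel⟩
    have hrel' : sm ≤ s ∧ sm + tm.length ≤ s + t.length := by
      have := hrel (ym, tm, sm) (by simp) (y, t, s) (by simp)
      exact this
    obtain ⟨v', hv'inf, hv'suf, hv'len⟩ :=
      IH (ym, tm, sm) (fun q hq => hall q (by simp at hq ⊢; tauto)) hch1
    obtain ⟨hpre, hsuf, hocc⟩ := hall (y, t, s) (by simp)
    obtain ⟨hprem, hsufm, hoccm⟩ := hall (ym, tm, sm) (by simp)
    simp only at hpre hsuf hocc hprem hsufm hoccm hv'suf hv'len hrel' ⊢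
    set o := sm + tm.length - s with ho
    have hot : o ≤ tm.length := by omega
    have hot2 : o ≤ t.length := by omega
    have hoty : o ≤ y.length := le_trans hot2 hpre.length_le
    have hoym : o ≤ ym.length := le_trans hot hsufm.length_le
    have hov : o ≤ v'.length := le_trans hoym hv'suf.length_le
    -- key equality
    have E : v'.drop (v'.length - o) = y.take o := by
      rcases le_or_gt s (sm + tm.length) with hcase | hcase
      · have e1 : v'.drop (v'.length - o) = tm.drop (tm.length - o) := by
          rw [suffix_drop_eq hv'suf hoym, suffix_drop_eq hsufm hot]
        have e2 : tm.drop (tm.length - o) = (u.drop s).take o := by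
          calc tm.drop (tm.length - o)
              = ((u.drop sm).take tm.length).drop (tm.length - o) := by rw [hoccm]
            _ = ((u.drop sm).drop (tm.length - o)).take (tm.length - (tm.length - o)) := by
                rw [List.drop_take]
            _ = (u.drop s).take o := by
                rw [List.drop_drop, show sm + (tm.length - o) = s by omega,
                  show tm.length - (tm.length - o) = o by omega]
        have e3 : t.take o = (u.drop s).take o := by
          calc t.take o = ((u.drop s).take t.length).take o := by rw [hocc]
            _ = (u.drop s).take o := by rw [List.take_take, min_eq_left hot2]
        have e4 : y.take o = t.take o := prefix_take_eq hpre hot2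
        rw [e1, e2, ← e3, ← e4]
      · have ho0 : o = 0 := by omega
        rw [ho0]
        simp
    have ysuf : y <:+ v' ++ y.drop o := by
      refine ⟨v'.take (v'.length - o), ?_⟩
      calc v'.take (v'.length - o) ++ y
          = v'.take (v'.length - o) ++ (y.take o ++ y.drop o) := by rw [List.take_append_drop]
        _ = (v'.take (v'.length - o) ++ y.take o) ++ y.drop o := by rw [List.append_assoc]
        _ = (v'.take (v'.length - o) ++ v'.drop (v'.length - o)) ++ y.drop o := by rw [E]
        _ = v' ++ y.drop o := by rw [List.take_append_drop]
    refine ⟨v' ++ y.drop o, ?_, ysuf, ?_⟩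
    · intro q hq
      rw [List.append_assoc, List.mem_append] at hq
      rcases hq with hq | hq
      · exact (hv'inf q (by simp at hq ⊢; tauto)).trans ⟨[], y.drop o, by simp⟩
      · simp only [List.cons_append, List.nil_append, List.mem_cons, List.mem_singleton] at hq
        rcases hq with hq | hq
        · rw [hq]
          exact (hv'inf (ym, tm, sm) (by simp)).trans ⟨[], y.drop o, by simp⟩
        · rcases hq with hq | hq
          · rw [hq]
            exact ysuf.isInfix
          · simp at hq
    · have hlen1 : (v' ++ y.drop o).length = v'.length + (y.length - o) := by simp
      rw [hlen1]
      simp only [List.map_append, List.sum_append, List.map_cons, List.map_nil,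
        List.sum_cons, List.sum_nil] at hv'len ⊢
      omega

lemma chain_main (u : Str) (L : List (Str × Str × ℕ))
    (hall : ∀ q ∈ L, q.2.1 <+: q.1 ∧ q.2.1 <:+ q.1 ∧ OccAt u q.2.2 q.2.1 ∧
      q.2.2 + q.2.1.length ≤ u.length)
    (hch : List.Chain' (fun a b => a.2.2 ≤ b.2.2 ∧ a.2.2 + a.2.1.length ≤ b.2.2 + b.2.1.length) L) :
    ∃ v : Str, (∀ q ∈ L, q.1 <:+: v) ∧
      v.length + (L.map fun q => q.2.1.length).sum
        ≤ u.length + (L.map fun q => q.1.length).sum := by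
  rcases List.eq_nil_or_concat L with rfl | ⟨M, r, rfl⟩
  · exact ⟨[], by simp, by simp⟩
  · rw [List.concat_eq_append] at hall hch ⊢
    obtain ⟨v, hinf, -, hlen⟩ :=
      chain_aux u M r (fun q hq => ⟨(hall q hq).1, (hall q hq).2.1, (hall q hq).2.2.1⟩) hch
    refine ⟨v, hinf, ?_⟩
    have := (hall r (by simp)).2.2.2
    omega

-- ov and superstr lemmas
lemma ov_spec {x y : Str} (hx : x ≠ []) (hy : y ≠ []) :
    ∃ v u w : Str, v.length = ov x y ∧ u ≠ [] ∧ x = u ++ v ∧ w ≠ [] ∧ y = v ++ w := by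
  have hne : Set.Nonempty {k | ∃ v : Str, v.length = k ∧ (∃ u : Str, u ≠ [] ∧ x = u ++ v) ∧
      (∃ w : Str, w ≠ [] ∧ y = v ++ w)} :=
    ⟨0, [], rfl, ⟨x, hx, by simp⟩, ⟨y, hy, by simp⟩⟩
  have hbdd : BddAbove {k | ∃ v : Str, v.length = k ∧ (∃ u : Str, u ≠ [] ∧ x = u ++ v) ∧
      (∃ w : Str, w ≠ [] ∧ y = v ++ w)} := by
    refine ⟨x.length, ?_⟩
    rintro k ⟨v, rfl, ⟨u, -, rfl⟩, -⟩
    simp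
  have hmem := Nat.sSup_mem hne hbdd
  obtain ⟨v, hv, ⟨u, hu, hxu⟩, ⟨w, hw, hyw⟩⟩ := hmem
  exact ⟨v, u, w, hv, hu, hxu, hw, hyw⟩

lemma prefStr_length (x y : Str) : (prefStr x y).length = distStr x y := by
  simp only [prefStr, distStr, List.length_take]
  exact min_eq_left (Nat.sub_le _ _)

lemma prefix_merge (x y : Str) : x <+: prefStr x y ++ y := by
  by_cases hx : x = []
  · simp [hx]
  by_cases hy : y = []
  · subst hy
    have hov : ov x ([] : Str) = 0 := by
      have hempty : {k | ∃ v : Str, v.length = k ∧ (∃ u : Str, u ≠ [] ∧ x = u ++ v) ∧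
          (∃ w : Str, w ≠ [] ∧ ([] : Str) = v ++ w)} = ∅ := by
        ext k
        simp only [Set.mem_setOf_eq, Set.mem_empty_iff_false, iff_false]
        rintro ⟨v, -, -, w, hw, hvw⟩
        exact hw (List.append_eq_nil_iff.mp hvw.symm).2
      rw [ov, hempty, csSup_empty]
      rfl
    rw [prefStr, hov, Nat.sub_zero, List.take_length, List.append_nil]
  · obtain ⟨v, u, w, hv, hu, hxu, hw, hyw⟩ := ov_spec hx hy
    have hpe : prefStr x y = u := by
      rw [prefStr, ← hv, hxu, List.length_append, Nat.add_sub_cancel, List.take_left]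
    rw [hpe, hyw, ← List.append_assoc, ← hxu]
    exact ⟨w, rfl⟩

lemma superstr_head_prefix (l : List Str) : ∀ x : Str, x <+: superstr (x :: l) := by
  induction l with
  | nil => intro x; exact List.prefix_rfl
  | cons y l IH =>
    intro x
    show x <+: prefStr x y ++ superstr (y :: l)
    obtain ⟨w, hw⟩ := IH y
    rw [← hw, ← List.append_assoc]
    exact (prefix_merge x y).trans ⟨w, rfl⟩

lemma superstr_getLast_suffix : ∀ (l : List Str) (h : l ≠ []), l.getLast h <:+ superstr l := by
  intro l
  induction l with
  | nil => intro h; exact absurd rfl h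
  | cons a l IH =>
    intro h
    cases l with
    | nil => exact List.suffix_rfl
    | cons b l' =>
      rw [List.getLast_cons (List.cons_ne_nil _ _)]
      exact (IH (List.cons_ne_nil _ _)).trans ⟨prefStr a b, rfl⟩

noncomputable def adjSum (l : List Str) : ℕ := ((l.zip l.tail).map fun p => distStr p.1 p.2).sum

lemma adjSum_single (x : Str) : adjSum [x] = 0 := by simp [adjSum]

lemma adjSum_cons_cons (x y : Str) (l : List Str) :
    adjSum (x :: y :: l) = distStr x y + adjSum (y :: l) := by
  simp [adjSum]

lemma superstr_length : ∀ (l : List Str) (h : l ≠ []),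
    (superstr l).length = adjSum l + (l.getLast h).length := by
  intro l
  induction l with
  | nil => intro h; exact absurd rfl h
  | cons a l IH =>
    intro h
    cases l with
    | nil => simp [superstr, adjSum_single]
    | cons b l' =>
      show (prefStr a b ++ superstr (b :: l')).length = _
      rw [List.length_append, prefStr_length, IH (List.cons_ne_nil _ _),
        adjSum_cons_cons, List.getLast_cons (List.cons_ne_nil _ _)]
      omega

lemma zip_append_right {α β : Type*} :
    ∀ (l₃ : List β) (l₁ l₂ : List α), l₃.length ≤ l₁.length → (l₁ ++ l₂).zip l₃ = l₁.zip l₃ := by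
  intro l₃
  induction l₃ with
  | nil => intro l₁ l₂ _; simp
  | cons c cs IH =>
    intro l₁ l₂ h
    cases l₁ with
    | nil => simp at h
    | cons a as =>
      simp only [List.cons_append, List.zip_cons_cons]
      rw [IH as l₂ (by simpa using h)]

lemma adjSum_concat : ∀ (l : List Str) (h : l ≠ []) (d : Str),
    adjSum (l ++ [d]) = adjSum l + distStr (l.getLast h) d := by
  intro l
  induction l with
  | nil => intro h; exact absurd rfl h
  | cons a l IH =>
    intro h d
    cases l with
    | nil => simp [adjSum_cons_cons, adjSum_single]
    | cons b l' =>
      show adjSum (a :: b :: (l' ++ [d])) = _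
      rw [adjSum_cons_cons, show b :: (l' ++ [d]) = (b :: l') ++ [d] from rfl,
        IH (List.cons_ne_nil _ _) d, adjSum_cons_cons,
        List.getLast_cons (List.cons_ne_nil _ _)]
      omega

lemma cycleWeight_eq_adjSum (a : Str) (l : List Str) :
    cycleWeight (a :: l) = adjSum (a :: (l ++ [a])) := by
  have hrot : (a :: l).rotate 1 = l ++ [a] := by
    rw [List.rotate_cons_succ, List.rotate_zero]
  rw [cycleWeight, adjSum, hrot]
  congr 1
  show ((a :: l).zip (l ++ [a])).map _ = ((a :: (l ++ [a])).zip (l ++ [a])).map _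
  rw [show a :: (l ++ [a]) = (a :: l) ++ [a] from rfl,
    zip_append_right (l ++ [a]) (a :: l) [a] (by simp)]

lemma cycleWeight_rotate_one (l : List Str) : cycleWeight (l.rotate 1) = cycleWeight l := by
  match l with
  | [] => simp
  | [a] =>
    have h1 : ([a] : List Str).rotate 1 = [a] := by simp
    rw [h1]
  | a :: b :: tl =>
    have h1 : (a :: b :: tl).rotate 1 = b :: (tl ++ [a]) := by
      rw [List.rotate_cons_succ, List.rotate_zero]; rfl
    rw [h1, cycleWeight_eq_adjSum, cycleWeight_eq_adjSum,
      show (b :: tl) ++ [a] = b :: (tl ++ [a]) from rfl, adjSum_cons_cons,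
      show b :: ((tl ++ [a]) ++ [b]) = (b :: (tl ++ [a])) ++ [b] from rfl,
      adjSum_concat _ (List.cons_ne_nil _ _) b,
      List.getLast_cons (by simp : tl ++ [a] ≠ []), List.getLast_concat]
    omega

lemma cycleWeight_rotate (l : List Str) (k : ℕ) : cycleWeight (l.rotate k) = cycleWeight l := by
  induction k with
  | zero => rw [List.rotate_zero]
  | succ k IH => rw [← List.rotate_rotate, cycleWeight_rotate_one, IH]

lemma toList_map_sum {α : Type*} (s : Finset α) (f : α → ℕ) :
    (s.toList.map f).sum = ∑ a ∈ s, f a := by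
  rw [Finset.sum_eq_multiset_sum, ← Multiset.sum_coe, ← Multiset.map_coe, Finset.toList,
    Multiset.coe_toList]

lemma exists_opt (S : Finset Str) : ∃ u : Str, ApproxSol S u ∧ u.length = OPT S := by
  have hne : Set.Nonempty {n | ∃ u : Str, ApproxSol S u ∧ u.length = n} := by
    refine ⟨_, S.toList.flatten, fun s hs => Or.inl ?_, rfl⟩
    exact List.infix_of_mem_flatten (Finset.mem_toList.mpr hs)
  exact Nat.sInf_mem hne


end AuxProof

/-- if for each cycle `p` of an optimal cycle cover, `x p` is a
substring of the closed superstring `y_p = ⟨x_j, …, x_r, x_1, …, x_j⟩`, then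
`OPT(A) ≤ OPT(S) + w(CYC(G_S))` for `A = {x p}`. -/
theorem opt_A_upperbound
    (S : Finset Str) (hS : SubstrFree S)
    (C : Finset (List Str)) (hC : IsCycleCover S C)
    (hopt : ∀ C', IsCycleCover S C' → coverWeight C ≤ coverWeight C')
    (j : List Str → ℕ) (hj : ∀ p ∈ C, 1 ≤ j p ∧ j p ≤ p.length)
    (x : List Str → Str)
    (hx : ∀ p ∈ C,
      x p <:+: superstr (p.rotate (j p - 1) ++ [(p.rotate (j p - 1)).headI])) :
    OPT (C.image x) ≤ OPT S + coverWeight C := by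
  classical
  obtain ⟨u₀, hu₀, hu₀len⟩ := exists_opt S
  obtain ⟨hCne, hCnd, hCdisj, hCmem, hCxor⟩ := hC
  -- per-cycle data
  have key : ∀ pp : {p // p ∈ C}, ∃ (Y T : Str) (sp : ℕ) (t0 : Str),
      t0 ∈ pp.1 ∧ (T = t0 ∨ T = rc t0) ∧ T <+: Y ∧ T <:+ Y ∧ OccAt u₀ sp T ∧
      sp + T.length ≤ u₀.length ∧
      Y.length = cycleWeight pp.1 + T.length ∧ (x pp.1 <:+: Y ∨ rc (x pp.1) <:+: Y) := by
    rintro ⟨p, hp⟩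
    have hpne : p ≠ [] := hCne p hp
    set q := p.rotate (j p - 1) with hq
    have hqne : q ≠ [] := by
      intro h
      apply hpne
      rw [← List.length_eq_zero_iff, ← List.length_rotate p (j p - 1), ← hq, h]
      rfl
    obtain ⟨a, q', hq'⟩ := List.exists_cons_of_ne_nil hqne
    have ht0 : q.headI = a := by rw [hq']; rfl
    set y := superstr (q ++ [q.headI]) with hydef
    have hcons : q ++ [q.headI] = a :: (q' ++ [a]) := by rw [hq']; rfl
    have hprefix : q.headI <+: y := by
      rw [hydef, hcons, ht0]
      exact superstr_head_prefix _ a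
    have hsuffix : q.headI <:+ y := by
      have h1 := superstr_getLast_suffix (q ++ [q.headI]) (by simp)
      rwa [List.getLast_concat] at h1
    have hylen : y.length = cycleWeight p + q.headI.length := by
      rw [hydef, superstr_length _ (by simp), List.getLast_concat, hcons, ht0]
      have h2 : adjSum (a :: (q' ++ [a])) = cycleWeight (a :: q') := (cycleWeight_eq_adjSum a q').symm
      rw [h2, ← hq', hq, cycleWeight_rotate]
    have ht0mem : q.headI ∈ p := by
      have h1 : q.headI ∈ q := by rw [hq']; exact List.mem_cons_self
      rw [hq] at h1
      exact (List.mem_rotate).mp h1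
    have hxy : x p <:+: y := hx p hp
    have hts : q.headI ∈ S ∨ rc q.headI ∈ S := hCmem p hp _ ht0mem
    have hocc : q.headI <:+: u₀ ∨ rc q.headI <:+: u₀ := by
      rcases hts with h | h
      · exact hu₀ _ h
      · rcases hu₀ _ h with h' | h'
        · exact Or.inr h'
        · exact Or.inl (by rwa [rc_rc] at h')
    rcases hocc with h | h
    · obtain ⟨sp, hsp, hsplen⟩ := occAt_of_infix h
      exact ⟨y, q.headI, sp, q.headI, ht0mem, Or.inl rfl, hprefix, hsuffix, hsp, hsplen,
        hylen, Or.inl hxy⟩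
    · obtain ⟨sp, hsp, hsplen⟩ := occAt_of_infix h
      exact ⟨rc y, rc q.headI, sp, q.headI, ht0mem, Or.inr rfl,
        rc_suffix_prefix hsuffix, rc_prefix_suffix hprefix, hsp, hsplen,
        by rw [rc_length, rc_length, hylen], Or.inr (rc_infix hxy)⟩
  choose Y T sp t0 hmem horient hpreY hsufY hoccY holenY hylenY hxinY using key
  -- distinctness of the T's
  have hTne : ∀ pp qq : {p // p ∈ C}, pp ≠ qq → T pp ≠ T qq := by
    intro pp qq hne heq
    have hval : pp.1 ≠ qq.1 := fun h => hne (Subtype.ext h)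
    have h1 := hmem pp
    have h2 := hmem qq
    have hcases : t0 pp = t0 qq ∨ t0 pp = rc (t0 qq) := by
      rcases horient pp with ha | ha <;> rcases horient qq with hb | hb
      · left; rw [← ha, ← hb, heq]
      · right; rw [← ha, heq, hb]
      · right; rw [← rc_rc (t0 pp), ← ha, heq, hb]
      · left; exact rc_inj (by rw [← ha, ← hb, heq])
    rcases hcases with h | h
    · exact hCdisj pp.1 pp.2 qq.1 qq.2 hval (t0 pp) h1 (h ▸ h2)
    · rcases hCmem qq.1 qq.2 _ h2 with hs' | hs'
      · have hxor := hCxor _ hs'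
        have hA : ∃ c ∈ C, t0 qq ∈ c := ⟨qq.1, qq.2, h2⟩
        have hB : ∃ c ∈ C, rc (t0 qq) ∈ c := ⟨pp.1, pp.2, h ▸ h1⟩
        rcases hxor with ⟨-, hn⟩ | ⟨-, hn⟩
        · exact hn hB
        · exact hn hA
      · have hxor := hCxor _ hs'
        have hA : ∃ c ∈ C, rc (t0 qq) ∈ c := ⟨pp.1, pp.2, h ▸ h1⟩
        have hB : ∃ c ∈ C, rc (rc (t0 qq)) ∈ c := ⟨qq.1, qq.2, by rw [rc_rc]; exact h2⟩
        rcases hxor with ⟨-, hn⟩ | ⟨-, hn⟩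
        · exact hn hB
        · exact hn hA
  have hTS : ∀ pp : {p // p ∈ C}, T pp ∈ S ∨ rc (T pp) ∈ S := by
    intro pp
    rcases horient pp with h | h
    · rw [h]; exact hCmem _ pp.2 _ (hmem pp)
    · rw [h, rc_rc]; exact (hCmem _ pp.2 _ (hmem pp)).symm
  have hno : ∀ pp qq : {p // p ∈ C}, pp ≠ qq → ¬ (T pp <:+: T qq) :=
    fun pp qq h => hS _ (hTS pp) _ (hTS qq) (hTne pp qq h)
  -- sorting
  let r : {p // p ∈ C} → {p // p ∈ C} → Prop := fun a b => sp a ≤ sp b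
  haveI : IsTotal {p // p ∈ C} r := ⟨fun a b => le_total _ _⟩
  haveI : IsTrans {p // p ∈ C} r := ⟨fun a b c hab hbc => le_trans hab hbc⟩
  set L := List.insertionSort r C.attach.toList with hL
  have hperm : List.Perm L C.attach.toList := List.perm_insertionSort r _
  have hsorted : L.Pairwise r := List.pairwise_insertionSort r _
  have hnd : L.Nodup := hperm.symm.nodup (Finset.nodup_toList _)
  have hpw : L.Pairwise fun a b => sp a ≤ sp b ∧ a ≠ b := hsorted.and hnd
  have hchain : L.Chain' fun a b => sp a ≤ sp b ∧ sp a + (T a).length ≤ sp b + (T b).length := by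
    refine (hpw.imp ?_).isChain
    rintro a b ⟨hle, hne⟩
    refine ⟨hle, ?_⟩
    by_contra hlt
    push_neg at hlt
    exact hno b a (Ne.symm hne) (infix_of_nested (hoccY a) (hoccY b) hle (le_of_lt hlt))
  obtain ⟨v, hvinf, hvlen⟩ :=
    chain_main u₀ (L.map fun pp => (Y pp, T pp, sp pp))
      (by
        rintro q hq
        simp only [List.mem_map] at hq
        obtain ⟨pp, -, rfl⟩ := hq
        exact ⟨hpreY pp, hsufY pp, hoccY pp, holenY pp⟩)
      (by exact (List.isChain_map _).2 hchain)
  -- v is an approximate solution for the image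
  have hA : ApproxSol (C.image x) v := by
    intro a ha
    obtain ⟨p, hp, rfl⟩ := Finset.mem_image.mp ha
    have hmemL : (⟨p, hp⟩ : {p // p ∈ C}) ∈ L :=
      hperm.mem_iff.mpr (Finset.mem_toList.mpr (Finset.mem_attach _ _))
    have hYinf : Y ⟨p, hp⟩ <:+: v :=
      hvinf _ (List.mem_map_of_mem hmemL)
    rcases hxinY ⟨p, hp⟩ with h | h
    · exact Or.inl (h.trans hYinf)
    · exact Or.inr (h.trans hYinf)
  -- length bound
  have hsum1 : ((L.map fun pp => (Y pp, T pp, sp pp)).map fun q => q.2.1.length).sum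
      = (L.map fun pp => (T pp).length).sum := by
    rw [List.map_map]; rfl
  have hsum2 : ((L.map fun pp => (Y pp, T pp, sp pp)).map fun q => q.1.length).sum
      = (L.map fun pp => (Y pp).length).sum := by
    rw [List.map_map]; rfl
  have hsum3 : (L.map fun pp => (Y pp).length).sum
      = (L.map fun pp => cycleWeight pp.1).sum + (L.map fun pp => (T pp).length).sum := by
    rw [← List.sum_map_add]
    congr 1
    exact List.map_congr_left fun pp _ => hylenY pp
  have hsum4 : (L.map fun pp => cycleWeight pp.1).sum = coverWeight C := by
    rw [(hperm.map fun pp => cycleWeight pp.1).sum_eq, toList_map_sum, Finset.sum_attach]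
    rfl
  have hfinal : v.length ≤ OPT S + coverWeight C := by
    rw [hsum1, hsum2, hsum3, hsum4] at hvlen
    omega
  exact le_trans (Nat.sInf_le ⟨v, hA, rfl⟩) hfinal
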